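/- Let I, J be symmetric quasi-Banach ideals of compact operators on H with I ⊄ J. For a ∈ J:I, the multiplication map T_a(x) = ax from I to J is continuous, and ‖a‖_{J:I} := sup{‖ax‖_J : x ∈ I, ‖x‖_I ≤ 1} defines a complete symmetric quasi-norm on the ideal J:I whose modulus of concavity does not exceed that of ‖·‖_J; moreover ‖ax‖_J ≤ ‖a‖_{J:I} ‖x‖_I for all a ∈ J:I, x ∈ I. -/

import Mathlib

open Filter Topology

noncomputable section

variable {H : Type*} [NormedAddCommGroup H] [InnerProductSpace ℂ H] [CompleteSpace H]

/-- The `n`-th singular value of a compact operator, realized as the `n`-th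
approximation number (indexed from `0`). -/
def sv (x : H →L[ℂ] H) (n : ℕ) : ℝ :=
  sInf ((fun F : H →L[ℂ] H => ‖x - F‖) ''
    {F | Module.finrank ℂ (LinearMap.range F.toLinearMap) ≤ n})

/-- A (not necessarily closed) two-sided ideal of `B(H)`. -/
structure IsOpIdeal (I : Set (H →L[ℂ] H)) : Prop where
  zero_mem : (0 : H →L[ℂ] H) ∈ I
  add_mem : ∀ {x y : H →L[ℂ] H}, x ∈ I → y ∈ I → x + y ∈ I
  smul_mem : ∀ (α : ℂ) {x : H →L[ℂ] H}, x ∈ I → α • x ∈ I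
  mul_mem_left : ∀ (a : H →L[ℂ] H) {x : H →L[ℂ] H}, x ∈ I → a * x ∈ I
  mul_mem_right : ∀ (a : H →L[ℂ] H) {x : H →L[ℂ] H}, x ∈ I → x * a ∈ I

/-- A rank-one (orthogonal) projection. -/
def IsRankOneProjection (p : H →L[ℂ] H) : Prop :=
  p * p = p ∧ IsSelfAdjoint p ∧ Module.finrank ℂ (LinearMap.range p.toLinearMap) = 1

/-- A symmetric quasi-norm (with modulus of concavity `C`) on a two-sided ideal `I`. -/
structure IsSymmetricQuasiNorm (I : Set (H →L[ℂ] H)) (q : (H →L[ℂ] H) → ℝ) (C : ℝ) :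
    Prop where
  one_le : 1 ≤ C
  nonneg : ∀ x ∈ I, 0 ≤ q x
  eq_zero : ∀ x ∈ I, (q x = 0 ↔ x = 0)
  smul : ∀ (α : ℂ), ∀ x ∈ I, q (α • x) = ‖α‖ * q x
  add_le : ∀ x ∈ I, ∀ y ∈ I, q (x + y) ≤ C * (q x + q y)
  sym : ∀ (a b : H →L[ℂ] H), ∀ x ∈ I, q (a * x * b) ≤ ‖a‖ * q x * ‖b‖
  rank_one : ∀ p ∈ I, IsRankOneProjection p → q p = 1

/-- Completeness of a quasi-norm on a subset of `B(H)`. -/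
def QCompleteOn (I : Set (H →L[ℂ] H)) (q : (H →L[ℂ] H) → ℝ) : Prop :=
  ∀ x : ℕ → (H →L[ℂ] H), (∀ n, x n ∈ I) →
    (∀ ε : ℝ, 0 < ε → ∃ N, ∀ m n, N ≤ m → N ≤ n → q (x m - x n) < ε) →
    ∃ l ∈ I, Tendsto (fun n => q (x n - l)) atTop (𝓝 0)

/-- A symmetric quasi-Banach ideal of compact operators on `H`. -/
structure IsSymQBIdeal (I : Set (H →L[ℂ] H)) (q : (H →L[ℂ] H) → ℝ) (C : ℝ) : Prop where
  ideal : IsOpIdeal I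
  compact : ∀ x ∈ I, IsCompactOperator ⇑x
  snorm : IsSymmetricQuasiNorm I q C
  complete : QCompleteOn I q

/-- The `J`-dual space of `I`: all `a ∈ B(H)` with `ax ∈ J` for every `x ∈ I`. -/
def dualIdeal (J I : Set (H →L[ℂ] H)) : Set (H →L[ℂ] H) :=
  {a : H →L[ℂ] H | ∀ x ∈ I, a * x ∈ J}

/-- Bounded real sequences. -/
def linf : Set (ℕ → ℝ) := {ξ | ∃ M : ℝ, ∀ n, |ξ n| ≤ M}

/-- Real sequences converging to zero. -/
def czero : Set (ℕ → ℝ) := {ξ | Tendsto ξ atTop (𝓝 0)}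

/-- The decreasing rearrangement of a bounded sequence (indexed from `0`). -/
def dr (ξ : ℕ → ℝ) (n : ℕ) : ℝ :=
  sInf {s : ℝ | 0 ≤ s ∧ {k | s < |ξ k|}.Finite ∧ {k | s < |ξ k|}.ncard ≤ n}

/-- The multiplier space `F:G = {ξ ∈ l_∞ : ξη ∈ F for all η ∈ G}`. -/
def seqMul (F G : Set (ℕ → ℝ)) : Set (ℕ → ℝ) :=
  {ξ ∈ linf | ∀ η ∈ G, ξ * η ∈ F}

/-- The Calkin sequence space of an ideal `I` of compact operators:
all null sequences whose decreasing rearrangement is the singular value sequence of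
some member of `I`. -/
def calkinSet (I : Set (H →L[ℂ] H)) : Set (ℕ → ℝ) :=
  {ξ | ξ ∈ czero ∧ ∃ x ∈ I, dr ξ = sv x}

/-- The ideal of compact operators associated with a sequence space `E`. -/
def CE (H : Type*) [NormedAddCommGroup H] [InnerProductSpace ℂ H] [CompleteSpace H]
    (E : Set (ℕ → ℝ)) : Set (H →L[ℂ] H) :=
  {x | IsCompactOperator (⇑x : H → H) ∧ sv x ∈ E}

/-- Completeness of a quasi-norm on a set of sequences. -/
def SeqQCompleteOn (E : Set (ℕ → ℝ)) (q : (ℕ → ℝ) → ℝ) : Prop :=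
  ∀ x : ℕ → (ℕ → ℝ), (∀ n, x n ∈ E) →
    (∀ ε : ℝ, 0 < ε → ∃ N, ∀ m n, N ≤ m → N ≤ n → q (x m - x n) < ε) →
    ∃ l ∈ E, Tendsto (fun n => q (x n - l)) atTop (𝓝 0)

/-- A symmetric quasi-Banach sequence space in `c₀`, with modulus of concavity `C`. -/
structure IsSymSeqQN (E : Set (ℕ → ℝ)) (q : (ℕ → ℝ) → ℝ) (C : ℝ) : Prop where
  one_le : 1 ≤ C
  subset : E ⊆ czero
  zero_mem : (0 : ℕ → ℝ) ∈ E
  add_mem : ∀ ξ ∈ E, ∀ η ∈ E, ξ + η ∈ E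
  smul_mem : ∀ (c : ℝ), ∀ ξ ∈ E, c • ξ ∈ E
  nonneg : ∀ ξ ∈ E, 0 ≤ q ξ
  eq_zero : ∀ ξ ∈ E, (q ξ = 0 ↔ ξ = 0)
  smul : ∀ (c : ℝ), ∀ ξ ∈ E, q (c • ξ) = |c| * q ξ
  add_le : ∀ ξ ∈ E, ∀ η ∈ E, q (ξ + η) ≤ C * (q ξ + q η)
  solid : ∀ η ∈ E, ∀ ξ ∈ linf, (∀ n, dr ξ n ≤ dr η n) → ξ ∈ E ∧ q ξ ≤ q η
  unit : q (fun n => if n = 0 then (1 : ℝ) else 0) = 1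
  complete : SeqQCompleteOn E q

end

noncomputable section

variable {H : Type*} [NormedAddCommGroup H] [InnerProductSpace ℂ H] [CompleteSpace H]

/-- The natural quasi-norm on the `J`-dual space `J:I`:
`‖a‖_{J:I} = sup {qJ (a x) : x ∈ I, qI x ≤ 1}`. -/
def dualQN (J I : Set (H →L[ℂ] H)) (qJ qI : (H →L[ℂ] H) → ℝ) (a : H →L[ℂ] H) : ℝ :=
  sSup {r : ℝ | ∃ x ∈ I, qI x ≤ 1 ∧ r = qJ (a * x)}

-- ===== auxiliary machinery =====
open ContinuousLinearMap Finset
set_option linter.unusedSectionVars false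
set_option linter.unusedVariables false
set_option maxHeartbeats 1000000

local notation "⟪" x ", " y "⟫" => @inner ℂ _ _ x y

/-- Rank one operator `w ↦ ⟪f, w⟫ • g`. -/
def rk (f g : H) : H →L[ℂ] H := (innerSL ℂ f).smulRight g

lemma rk_apply (f g w : H) : rk f g w = ⟪f, w⟫ • g := rfl

lemma norm_rk_le (f g : H) : ‖rk f g‖ ≤ ‖f‖ * ‖g‖ := by
  refine opNorm_le_bound _ (by positivity) fun w => ?_
  rw [rk_apply, norm_smul]
  calc ‖⟪f, w⟫‖ * ‖g‖ ≤ (‖f‖ * ‖w‖) * ‖g‖ :=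
        mul_le_mul_of_nonneg_right (norm_inner_le_norm f w) (norm_nonneg g)
    _ = ‖f‖ * ‖g‖ * ‖w‖ := by ring

lemma rk_comp (f g f' g' : H) : rk f g * rk f' g' = ⟪f, g'⟫ • rk f' g := by
  ext w
  simp only [mul_apply_eq_comp, rk_apply, inner_smul_right, smul_smul, ContinuousLinearMap.smul_apply]
  ring_nf

lemma comp_rk (x : H →L[ℂ] H) (f g : H) : x * rk f g = rk f (x g) := by
  ext w; simp [rk_apply, mul_apply]

lemma adjoint_rk (f g : H) : ContinuousLinearMap.adjoint (rk f g) = rk g f := by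
  symm
  rw [ContinuousLinearMap.eq_adjoint_iff]
  intro x y
  simp [rk_apply, inner_smul_left, inner_smul_right]
  ring

lemma range_rk (f g : H) (hf : f ≠ 0) :
    LinearMap.range (rk f g).toLinearMap = Submodule.span ℂ {g} := by
  apply le_antisymm
  · rintro w ⟨u, rfl⟩
    exact Submodule.mem_span_singleton.2 ⟨⟪f, u⟫, rfl⟩
  · rw [Submodule.span_singleton_le_iff_mem]
    refine ⟨(⟪f, f⟫)⁻¹ • f, ?_⟩
    have h2 : (rk f g).toLinearMap ((⟪f, f⟫)⁻¹ • f) = ((⟪f, f⟫)⁻¹ * ⟪f, f⟫) • g := by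
      simp [rk_apply, inner_smul_right, smul_smul]
    rw [h2, inv_mul_cancel₀ (inner_self_ne_zero.2 hf), one_smul]

lemma isRankOneProjection_rk (v : H) (hv : ‖v‖ = 1) : IsRankOneProjection (rk v v) := by
  have hv0 : v ≠ 0 := by intro h; rw [h, norm_zero] at hv; norm_num at hv
  have hvv : ⟪v, v⟫ = 1 := by
    rw [inner_self_eq_norm_sq_to_K, hv]; norm_num
  refine ⟨?_, ?_, ?_⟩
  · rw [rk_comp, hvv, one_smul]
  · rw [ContinuousLinearMap.isSelfAdjoint_iff']
    exact adjoint_rk v v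
  · rw [range_rk v v hv0]
    exact finrank_span_singleton hv0

/-- If the values of `y` all lie in the span of `g ≠ 0`, then `y` is a rank-one operator. -/
lemma eq_rk_of_spanned (y : H →L[ℂ] H) (g : H) (hg : g ≠ 0)
    (hspan : ∀ w, ∃ c : ℂ, y w = c • g) :
    y = rk ((starRingEnd ℂ) ((⟪g, g⟫)⁻¹) • ContinuousLinearMap.adjoint y g) g := by
  ext w
  obtain ⟨c, hc⟩ := hspan w
  rw [rk_apply, inner_smul_left, adjoint_inner_left, hc, inner_smul_right]
  rw [RingHomCompTriple.comp_apply, RingHom.id_apply]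
  rw [mul_comm c, ← mul_assoc, inv_mul_cancel₀ (inner_self_ne_zero.2 hg), one_mul]

/-- An operator whose range has `finrank` one is spanned by a single nonzero vector. -/
lemma spanned_of_finrank_eq_one (y : H →L[ℂ] H)
    (h : Module.finrank ℂ (LinearMap.range y.toLinearMap) = 1) :
    ∃ g, g ≠ 0 ∧ ∀ w, ∃ c : ℂ, y w = c • g := by
  obtain ⟨v, hv0, hv⟩ := finrank_eq_one_iff'.1 h
  refine ⟨(v : H), by simpa using hv0, fun w => ?_⟩
  obtain ⟨c, hc⟩ := hv ⟨y w, LinearMap.mem_range.2 ⟨w, rfl⟩⟩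
  exact ⟨c, by simpa using congrArg Subtype.val hc.symm⟩

/-- An ideal containing a nonzero element contains all rank-one operators. -/
lemma rk_mem_ideal {I : Set (H →L[ℂ] H)} (hI : IsOpIdeal I)
    {x : H →L[ℂ] H} (hx : x ∈ I) (hx0 : x ≠ 0) (f g : H) : rk f g ∈ I := by
  obtain ⟨v₀, hv₀⟩ : ∃ v₀, x v₀ ≠ 0 := by
    by_contra hc
    push_neg at hc
    exact hx0 (ContinuousLinearMap.ext fun v => by simp [hc v])
  have key : rk f g = ((⟪x v₀, x v₀⟫)⁻¹ • rk (x v₀) g) * x * rk f v₀ := by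
    ext w
    simp only [mul_apply_eq_comp, rk_apply, ContinuousLinearMap.smul_apply, map_smul,
      inner_smul_right, smul_smul]
    have hzz : (⟪x v₀, x v₀⟫ : ℂ) ≠ 0 := inner_self_ne_zero.2 hv₀
    rw [inv_mul_cancel₀ hzz, mul_one]
  rw [key]
  exact hI.mul_mem_right _ (hI.mul_mem_left _ hx)

/-- A symmetric quasi-norm dominates the operator norm. -/
lemma norm_le_q {I : Set (H →L[ℂ] H)} {q : (H →L[ℂ] H) → ℝ} {C : ℝ}
    (hI : IsOpIdeal I) (hq : IsSymmetricQuasiNorm I q C)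
    {x : H →L[ℂ] H} (hx : x ∈ I) : ‖x‖ ≤ q x := by
  refine opNorm_le_bound x (hq.nonneg x hx) fun v => ?_
  rcases eq_or_ne (x v) 0 with h0 | h0
  · rw [h0, norm_zero]
    exact mul_nonneg (hq.nonneg x hx) (norm_nonneg v)
  have hv0 : v ≠ 0 := by rintro rfl; simp at h0
  have hnv : (0:ℝ) < ‖v‖ := norm_pos_iff.2 hv0
  have hnxv : (0:ℝ) < ‖x v‖ := norm_pos_iff.2 h0
  set vh : H := ((‖v‖⁻¹ : ℝ) : ℂ) • v with hvh
  have hvh1 : ‖vh‖ = 1 := by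
    rw [hvh, norm_smul]
    simp [abs_of_nonneg (inv_nonneg.2 hnv.le), inv_mul_cancel₀ hnv.ne']
  set u : H := ((‖x v‖⁻¹ : ℝ) : ℂ) • x v with hu
  have hu1 : ‖u‖ = 1 := by
    rw [hu, norm_smul]
    simp [abs_of_nonneg (inv_nonneg.2 hnxv.le), inv_mul_cancel₀ hnxv.ne']
  set p : H →L[ℂ] H := rk vh vh with hp
  have hproj : IsRankOneProjection p := isRankOneProjection_rk vh hvh1
  have hx0 : x ≠ 0 := by rintro rfl; simp at h0
  have hpI : p ∈ I := rk_mem_ideal hI hx hx0 vh vh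
  have hqp : q p = 1 := hq.rank_one p hpI hproj
  set B : H →L[ℂ] H := rk u vh with hB
  have hBxp : B * x * p = ⟪u, x vh⟫ • p := by
    ext w
    rw [hB, hp]
    simp only [mul_apply_eq_comp, rk_apply, ContinuousLinearMap.smul_apply, map_smul,
      inner_smul_right, smul_smul]
    rw [mul_comm]
  have hxvh : x vh = ((‖v‖⁻¹ : ℝ) : ℂ) • x v := by rw [hvh, map_smul]
  have hc : ⟪u, x vh⟫ = ((‖x v‖ * ‖v‖⁻¹ : ℝ) : ℂ) := by
    rw [hu, hxvh, inner_smul_left, inner_smul_right, inner_self_eq_norm_sq_to_K]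
    rw [Complex.conj_ofReal]
    have hxvne : ((‖x v‖ : ℝ) : ℂ) ≠ 0 := Complex.ofReal_ne_zero.2 hnxv.ne'
    have hvne : ((‖v‖ : ℝ) : ℂ) ≠ 0 := Complex.ofReal_ne_zero.2 hnv.ne'
    push_cast
    field_simp [hxvne, hvne]
    ring
    rfl
  have hnormc : ‖⟪u, x vh⟫‖ = ‖x v‖ * ‖v‖⁻¹ := by
    rw [hc, Complex.norm_real, Real.norm_eq_abs, abs_of_nonneg (by positivity)]
  have hqBxp : q (B * x * p) = ‖x v‖ * ‖v‖⁻¹ := by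
    rw [hBxp, hq.smul _ p hpI, hqp, hnormc, mul_one]
  have hsym : q (B * x * p) ≤ ‖B‖ * q x * ‖p‖ := hq.sym B p x hx
  have hBle : ‖B‖ ≤ 1 := by
    have := norm_rk_le u vh
    rw [hu1, hvh1] at this; simpa using this
  have hple : ‖p‖ ≤ 1 := by
    have := norm_rk_le vh vh
    rw [hvh1] at this; simpa using this
  have hfin : ‖x v‖ * ‖v‖⁻¹ ≤ q x := by
    rw [← hqBxp]
    refine le_trans hsym ?_
    have h1 : 0 ≤ q x := hq.nonneg x hx
    have t1 : ‖B‖ * q x ≤ 1 * q x := mul_le_mul_of_nonneg_right hBle h1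
    have t2 : ‖B‖ * q x * ‖p‖ ≤ 1 * q x * ‖p‖ := mul_le_mul_of_nonneg_right t1 (norm_nonneg p)
    have t3 : 1 * q x * ‖p‖ ≤ 1 * q x * 1 := by
      refine mul_le_mul_of_nonneg_left hple (by linarith)
    calc ‖B‖ * q x * ‖p‖ ≤ 1 * q x * 1 := le_trans t2 t3
      _ = q x := by ring
  calc ‖x v‖ = (‖x v‖ * ‖v‖⁻¹) * ‖v‖ := by field_simp
    _ ≤ q x * ‖v‖ := mul_le_mul_of_nonneg_right hfin (norm_nonneg v)

lemma rk_zero_left (g : H) : rk (0 : H) g = 0 := by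
  ext w; simp [rk_apply]

/-- A symmetric quasi-norm is dominated by the operator norm on operators of rank ≤ 1. -/
lemma q_le_norm_of_spanned {J : Set (H →L[ℂ] H)} {q : (H →L[ℂ] H) → ℝ} {C : ℝ}
    (hJ : IsOpIdeal J) (hq : IsSymmetricQuasiNorm J q C)
    {y : H →L[ℂ] H} (hy : y ∈ J) (g : H) (hspan : ∀ w, ∃ c : ℂ, y w = c • g) :
    q y ≤ ‖y‖ := by
  rcases eq_or_ne y 0 with rfl | hy0
  · rw [(hq.eq_zero 0 hJ.zero_mem).2 rfl, norm_zero]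
  have hg : g ≠ 0 := by
    rintro rfl
    refine hy0 (ContinuousLinearMap.ext fun w => ?_)
    obtain ⟨c, hc⟩ := hspan w
    simp [hc]
  haveI : Nontrivial H := ⟨⟨g, 0, hg⟩⟩
  set f : H := (starRingEnd ℂ) ((⟪g, g⟫)⁻¹) • ContinuousLinearMap.adjoint y g with hf
  have hyf : y = rk f g := eq_rk_of_spanned y g hg hspan
  have hf0 : f ≠ 0 := by
    rintro h
    rw [h, rk_zero_left] at hyf
    exact hy0 hyf
  have hnf : (0:ℝ) < ‖f‖ := norm_pos_iff.2 hf0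
  set fh : H := ((‖f‖⁻¹ : ℝ) : ℂ) • f with hfh
  have hfh1 : ‖fh‖ = 1 := by
    rw [hfh, norm_smul]
    simp [abs_of_nonneg (inv_nonneg.2 hnf.le), inv_mul_cancel₀ hnf.ne']
  have hfhf : ⟪fh, fh⟫ = 1 := by
    rw [inner_self_eq_norm_sq_to_K, hfh1]; norm_num
  set p : H →L[ℂ] H := rk fh fh with hp
  have hproj : IsRankOneProjection p := isRankOneProjection_rk fh hfh1
  have hpJ : p ∈ J := rk_mem_ideal hJ hy hy0 fh fh
  have hqp : q p = 1 := hq.rank_one p hpJ hproj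
  set B : H →L[ℂ] H := rk fh g with hB
  have hyB : y = ((‖f‖ : ℝ) : ℂ) • B := by
    rw [hyf, hB, hfh]
    ext w
    simp only [rk_apply, ContinuousLinearMap.smul_apply, inner_smul_left, Complex.conj_ofReal,
      smul_smul]
    congr 1
    push_cast
    rw [← mul_assoc, mul_inv_cancel₀ (Complex.ofReal_ne_zero.2 hnf.ne'), one_mul]
  have hBJ : B ∈ J := by
    have : B = ((‖f‖⁻¹ : ℝ) : ℂ) • y := by
      rw [hyB, smul_smul]
      push_cast
      rw [inv_mul_cancel₀ (Complex.ofReal_ne_zero.2 hnf.ne'), one_smul]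
    rw [this]
    exact hJ.smul_mem _ hy
  have hBp : B * p * 1 = B := by
    rw [mul_one, hB, hp, rk_comp, hfhf, one_smul]
  have hqB : q B ≤ ‖g‖ := by
    have h1 : q (B * p * 1) ≤ ‖B‖ * q p * ‖(1 : H →L[ℂ] H)‖ := hq.sym B 1 p hpJ
    have hone : ‖(1 : H →L[ℂ] H)‖ = 1 := norm_one
    rw [hBp, hqp, hone, mul_one, mul_one] at h1
    exact le_trans h1 (by simpa [hfh1] using norm_rk_le fh g)
  have hqy : q y ≤ ‖f‖ * ‖g‖ := by
    rw [hyB, hq.smul _ B hBJ]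
    rw [Complex.norm_real, Real.norm_eq_abs, abs_of_nonneg hnf.le]
    exact mul_le_mul_of_nonneg_left hqB hnf.le
  refine le_trans hqy ?_
  have hyff : ‖y f‖ = ‖f‖ ^ 2 * ‖g‖ := by
    rw [hyf, rk_apply, norm_smul, inner_self_eq_norm_sq_to_K]
    congr 1
    rw [norm_pow, RCLike.norm_ofReal, abs_norm]
  have hle : ‖f‖ ^ 2 * ‖g‖ ≤ ‖y‖ * ‖f‖ := by
    rw [← hyff]; exact le_opNorm y f
  nlinarith [hnf]

section SumBoundAux

section SumBound

variable {P : Set (H →L[ℂ] H)} {q : (H →L[ℂ] H) → ℝ} {Λ : ℝ}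

lemma sum_mem_Ico (h0 : (0 : H →L[ℂ] H) ∈ P)
    (hadd : ∀ x ∈ P, ∀ y ∈ P, x + y ∈ P) (y : ℕ → (H →L[ℂ] H)) (hy : ∀ i, y i ∈ P) :
    ∀ (k m : ℕ), (∑ i ∈ Finset.Ico m (m + k), y i) ∈ P := by
  intro k
  induction k with
  | zero => intro m; simpa using h0
  | succ k ih =>
    intro m
    have hs : m + (k+1) = (m+1) + k := by omega
    rw [hs, Finset.sum_eq_sum_Ico_succ_bot (by omega)]
    exact hadd _ (hy m) _ (by simpa using ih (m+1))

lemma sum_bound (hΛ : 1 ≤ Λ) (h0 : (0 : H →L[ℂ] H) ∈ P) (hq0 : q 0 = 0)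
    (hadd : ∀ x ∈ P, ∀ y ∈ P, x + y ∈ P)
    (hqadd : ∀ x ∈ P, ∀ y ∈ P, q (x + y) ≤ Λ * (q x + q y))
    {δ : ℝ} (hδ : 0 ≤ δ) (hΛδ : Λ * δ ≤ 1/2)
    (y : ℕ → (H →L[ℂ] H)) (hy : ∀ i, y i ∈ P) :
    ∀ (k m : ℕ) (D : ℝ), 0 ≤ D → (∀ j, q (y (m + j)) ≤ D * δ ^ j) →
      q (∑ i ∈ Finset.Ico m (m + k), y i) ≤ 2 * Λ * D := by
  intro k
  induction k with
  | zero =>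
    intro m D hD _
    simp only [Nat.add_zero, Finset.Ico_self, Finset.sum_empty, hq0]
    have : (0:ℝ) ≤ 2 * Λ * D := by nlinarith
    linarith
  | succ k ih =>
    intro m D hD hDj
    have hs : m + (k+1) = (m+1) + k := by omega
    have hsum : (∑ i ∈ Finset.Ico m (m + (k+1)), y i)
        = y m + ∑ i ∈ Finset.Ico (m+1) ((m+1) + k), y i := by
      rw [hs, Finset.sum_eq_sum_Ico_succ_bot (by omega)]
    have hmem : (∑ i ∈ Finset.Ico (m+1) ((m+1) + k), y i) ∈ P :=
      sum_mem_Ico h0 hadd y hy k (m+1)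
    have htail : q (∑ i ∈ Finset.Ico (m+1) ((m+1) + k), y i) ≤ 2 * Λ * (D * δ) := by
      refine ih (m+1) (D * δ) (mul_nonneg hD hδ) fun j => ?_
      have := hDj (j + 1)
      have he : m + (j + 1) = m + 1 + j := by omega
      rw [he] at this
      calc q (y (m + 1 + j)) ≤ D * δ ^ (j+1) := this
        _ = D * δ * δ ^ j := by ring
    have hym : q (y m) ≤ D := by
      have := hDj 0
      simpa using this
    rw [hsum]
    have := hqadd (y m) (hy m) _ hmem
    have hq0' : 0 ≤ q (y m) + q (∑ i ∈ Finset.Ico (m+1) ((m+1) + k), y i) →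
        True := fun _ => trivial
    calc q (y m + ∑ i ∈ Finset.Ico (m+1) ((m+1) + k), y i)
        ≤ Λ * (q (y m) + q (∑ i ∈ Finset.Ico (m+1) ((m+1) + k), y i)) := this
      _ ≤ Λ * (D + 2 * Λ * (D * δ)) :=
          mul_le_mul_of_nonneg_left (add_le_add hym htail) (by linarith)
      _ ≤ 2 * Λ * D := by
          nlinarith [mul_le_mul_of_nonneg_left hΛδ
            (mul_nonneg (by linarith : (0:ℝ) ≤ Λ) hD)]
end SumBound

lemma telescope_Ico (f : ℕ → (H →L[ℂ] H)) :
    ∀ (k m : ℕ), f (m + k) - f m = ∑ i ∈ Finset.Ico m (m + k), (f (i+1) - f i) := by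
  intro k
  induction k with
  | zero => intro m; simp
  | succ k ih =>
    intro m
    have hs : m + (k+1) = (m + k) + 1 := by omega
    rw [hs, Finset.sum_Ico_succ_top (by omega), ← ih m]
    abel

end SumBoundAux

section SmallAux
variable {Iset : Set (H →L[ℂ] H)} {q : (H →L[ℂ] H) → ℝ} {C : ℝ}

lemma IsOpIdeal.sub_mem (hI : IsOpIdeal Iset) {x y : H →L[ℂ] H} (hx : x ∈ Iset) (hy : y ∈ Iset) :
    x - y ∈ Iset := by
  have := hI.add_mem hx (hI.smul_mem (-1) hy)
  rwa [neg_one_smul, ← sub_eq_add_neg] at this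

lemma q_zero (hq : IsSymmetricQuasiNorm Iset q C) (h0 : (0 : H →L[ℂ] H) ∈ Iset) : q 0 = 0 :=
  (hq.eq_zero 0 h0).2 rfl

lemma q_neg (hq : IsSymmetricQuasiNorm Iset q C) {x : H →L[ℂ] H} (hx : x ∈ Iset) : q (-x) = q x := by
  have := hq.smul (-1) x hx
  rwa [neg_one_smul, norm_neg, norm_one, one_mul] at this

lemma q_neg_sub (hq : IsSymmetricQuasiNorm Iset q C) (hI : IsOpIdeal Iset)
    {x y : H →L[ℂ] H} (hx : x ∈ Iset) (hy : y ∈ Iset) : q (x - y) = q (y - x) := by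
  have := q_neg hq (hI.sub_mem hy hx)
  rwa [neg_sub] at this

/-- quasi-triangle with a common constant `Λ ≥ C`. -/
lemma q_add_le_lam (hq : IsSymmetricQuasiNorm Iset q C) {Λ : ℝ} (hΛ : C ≤ Λ)
    {x y : H →L[ℂ] H} (hx : x ∈ Iset) (hy : y ∈ Iset) : q (x + y) ≤ Λ * (q x + q y) :=
  le_trans (hq.add_le x hx y hy)
    (mul_le_mul_of_nonneg_right hΛ (add_nonneg (hq.nonneg x hx) (hq.nonneg y hy)))

lemma q_sub_le_lam (hq : IsSymmetricQuasiNorm Iset q C) (hI : IsOpIdeal Iset) {Λ : ℝ} (hΛ : C ≤ Λ)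
    {x y : H →L[ℂ] H} (hx : x ∈ Iset) (hy : y ∈ Iset) : q (x - y) ≤ Λ * (q x + q y) := by
  have h := q_add_le_lam hq hΛ hx (hI.smul_mem (-1) hy)
  rw [neg_one_smul, ← sub_eq_add_neg] at h
  rwa [q_neg hq hy] at h

end SmallAux

/-- Baire-type lemma: some set `{w ∈ I : qJ (a w) ≤ k}` is somewhere dense. -/
lemma baire_interior {I J : Set (H →L[ℂ] H)} {qI qJ : (H →L[ℂ] H) → ℝ} {CI CJ : ℝ}
    (hI : IsSymQBIdeal I qI CI) (hJ : IsSymQBIdeal J qJ CJ)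
    {a : H →L[ℂ] H} (ha : a ∈ dualIdeal J I) :
    ∃ (k : ℕ) (x₀ : H →L[ℂ] H), x₀ ∈ I ∧ ∃ r : ℝ, 0 < r ∧
      ∀ y, y ∈ I → qI (y - x₀) < r → ∀ ρ, 0 < ρ →
        ∃ w, (w ∈ I ∧ qJ (a * w) ≤ (k:ℝ)) ∧ qI (y - w) < ρ := by
  set Λ : ℝ := max CI CJ with hΛdef
  have hΛ : 1 ≤ Λ := le_trans hI.snorm.one_le (le_max_left _ _)
  have hΛ0 : (0:ℝ) < Λ := lt_of_lt_of_le one_pos hΛ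
  have hCIΛ : CI ≤ Λ := le_max_left _ _
  have qI0 : qI 0 = 0 := q_zero hI.snorm hI.ideal.zero_mem
  by_contra hcon
  push_neg at hcon
  set δ : ℝ := (8 * Λ^3)⁻¹ with hδdef
  have hδ0 : 0 < δ := by positivity
  have hδ1 : δ < 1 := by
    rw [hδdef]
    rw [inv_lt_one_iff₀]
    right
    have h3 : (1:ℝ) ≤ Λ^3 := one_le_pow₀ hΛ
    linarith
  have h8δ : 8 * Λ^3 * δ = 1 := mul_inv_cancel₀ (by positivity)
  have hΛδ : Λ * δ ≤ 1/2 := by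
    rw [hδdef, mul_inv_le_iff₀ (by positivity)]
    have h2 : (1:ℝ) ≤ Λ^2 := one_le_pow₀ hΛ
    nlinarith
  -- one construction step
  have step : ∀ (k : ℕ) (x : H →L[ℂ] H), x ∈ I → ∀ r : ℝ, 0 < r →
      ∃ y s, y ∈ I ∧ 0 < s ∧ qI (y - x) < r ∧ s ≤ r * δ ∧
        ∀ w, (w ∈ I ∧ qJ (a * w) ≤ (k:ℝ)) → 8 * Λ^3 * s ≤ qI (y - w) := by
    intro k x hx r hr
    obtain ⟨y, hyI, hyx, ρ, hρ, hw⟩ := hcon k x hx r hr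
    refine ⟨y, min ρ r * δ, hyI, by positivity, hyx, ?_, ?_⟩
    · exact mul_le_mul_of_nonneg_right (min_le_right _ _) hδ0.le
    · intro w hw'
      have he : 8 * Λ^3 * (min ρ r * δ) = min ρ r := by
        linear_combination (min ρ r) * h8δ
      rw [he]
      exact le_trans (min_le_left _ _) (hw w hw')
  -- the recursively defined shrinking sequence of balls
  have stepSt : ∀ (k : ℕ) (s : {p : (H →L[ℂ] H) × ℝ // p.1 ∈ I ∧ 0 < p.2}),
      ∃ t : {p : (H →L[ℂ] H) × ℝ // p.1 ∈ I ∧ 0 < p.2},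
        qI (t.1.1 - s.1.1) < s.1.2 ∧ t.1.2 ≤ s.1.2 * δ ∧
          ∀ w, (w ∈ I ∧ qJ (a * w) ≤ (k:ℝ)) → 8 * Λ^3 * t.1.2 ≤ qI (t.1.1 - w) := by
    intro k s
    obtain ⟨y, s', hyI, hs', h1, h2, h3⟩ := step k s.1.1 s.2.1 s.1.2 s.2.2
    exact ⟨⟨(y, s'), hyI, hs'⟩, h1, h2, h3⟩
  set seq : ℕ → {p : (H →L[ℂ] H) × ℝ // p.1 ∈ I ∧ 0 < p.2} :=
    fun k => Nat.rec ⟨(0, 1), hI.ideal.zero_mem, one_pos⟩ (fun k s => (stepSt k s).choose) k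
    with hseqdef
  have seq_succ : ∀ k, seq (k+1) = (stepSt k (seq k)).choose := fun k => rfl
  set xx : ℕ → H →L[ℂ] H := fun k => (seq k).1.1 with hxxdef
  set rr : ℕ → ℝ := fun k => (seq k).1.2 with hrrdef
  have hxxI : ∀ k, xx k ∈ I := fun k => (seq k).2.1
  have hrr0 : ∀ k, 0 < rr k := fun k => (seq k).2.2
  have hspec : ∀ k, qI (xx (k+1) - xx k) < rr k ∧ rr (k+1) ≤ rr k * δ ∧
      ∀ w, (w ∈ I ∧ qJ (a * w) ≤ (k:ℝ)) → 8 * Λ^3 * rr (k+1) ≤ qI (xx (k+1) - w) := by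
    intro k
    have := (stepSt k (seq k)).choose_spec
    rw [← seq_succ k] at this
    exact this
  have hrr1 : rr 0 = 1 := rfl
  have hdecay : ∀ m j, rr (m + j) ≤ rr m * δ ^ j := by
    intro m j
    induction j with
    | zero => simp
    | succ j ih =>
      have h1 : rr (m + j + 1) ≤ rr (m + j) * δ := (hspec (m+j)).2.1
      have h2 : rr (m + j) * δ ≤ rr m * δ ^ j * δ := mul_le_mul_of_nonneg_right ih hδ0.le
      calc rr (m + (j+1)) = rr (m + j + 1) := by ring_nf
        _ ≤ rr m * δ ^ j * δ := le_trans h1 h2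
        _ = rr m * δ ^ (j+1) := by ring
  have hrrδ : ∀ m, rr m ≤ δ ^ m := by
    intro m
    have := hdecay 0 m
    simpa [hrr1] using this
  -- Cauchy estimate
  have hCauchy : ∀ m d, qI (xx (m + d) - xx m) ≤ 2 * Λ * rr m := by
    intro m d
    have htel := telescope_Ico xx d m
    rw [htel]
    refine sum_bound hΛ hI.ideal.zero_mem qI0
      (fun x hx y hy => hI.ideal.add_mem hx hy)
      (fun x hx y hy => q_add_le_lam hI.snorm hCIΛ hx hy)
      hδ0.le hΛδ _ (fun i => hI.ideal.sub_mem (hxxI (i+1)) (hxxI i)) d m (rr m) (hrr0 m).le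
      fun j => ?_
    calc qI (xx (m + j + 1) - xx (m + j)) ≤ rr (m + j) := (hspec (m+j)).1.le
      _ ≤ rr m * δ ^ j := hdecay m j
  -- limit of the sequence
  obtain ⟨xs, hxsI, hxs⟩ := hI.complete xx hxxI (by
    intro ε hε
    obtain ⟨N, hN⟩ := exists_pow_lt_of_lt_one (show (0:ℝ) < ε / (2*Λ) by positivity) hδ1
    refine ⟨N, fun m n hm hn => ?_⟩
    have key : ∀ u v : ℕ, N ≤ u → u ≤ v → qI (xx v - xx u) < ε := by
      intro u v hu huv
      obtain ⟨d, rfl⟩ : ∃ d, v = u + d := ⟨v - u, by omega⟩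
      calc qI (xx (u + d) - xx u) ≤ 2 * Λ * rr u := hCauchy u d
        _ ≤ 2 * Λ * δ ^ u := by nlinarith [hrrδ u, hΛ0]
        _ ≤ 2 * Λ * δ ^ N := by
            have := pow_le_pow_of_le_one hδ0.le hδ1.le hu
            nlinarith
        _ < ε := by
            have h2Λ : (0:ℝ) < 2*Λ := by linarith
            calc 2 * Λ * δ ^ N < 2 * Λ * (ε / (2*Λ)) := by
                  exact mul_lt_mul_of_pos_left hN h2Λ
              _ = ε := by field_simp
    rcases le_total m n with h | h
    · have := key m n hm h
      rwa [q_neg_sub hI.snorm hI.ideal (hxxI n) (hxxI m)] at this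
    · exact key n m hn h)
  -- distance from the limit to the centers
  have hclose : ∀ k, qI (xs - xx (k+1)) ≤ 2 * Λ^2 * rr (k+1) := by
    intro k
    have hev : ∀ᶠ m in atTop, qI (xs - xx (k+1)) ≤ Λ * (qI (xx m - xs) + 2 * Λ * rr (k+1)) := by
      refine eventually_atTop.2 ⟨k+1, fun m hm => ?_⟩
      obtain ⟨d, rfl⟩ : ∃ d, m = (k+1) + d := ⟨m - (k+1), by omega⟩
      have hsplit : xs - xx (k+1) = (xs - xx ((k+1)+d)) + (xx ((k+1)+d) - xx (k+1)) := by abel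
      have h1 : qI (xs - xx (k+1)) ≤ Λ * (qI (xs - xx ((k+1)+d)) + qI (xx ((k+1)+d) - xx (k+1))) := by
        rw [hsplit]
        exact q_add_le_lam hI.snorm hCIΛ (hI.ideal.sub_mem hxsI (hxxI ((k+1)+d)))
          (hI.ideal.sub_mem (hxxI ((k+1)+d)) (hxxI (k+1)))
      refine le_trans h1 ?_
      have h2 : qI (xs - xx ((k+1)+d)) = qI (xx ((k+1)+d) - xs) :=
        q_neg_sub hI.snorm hI.ideal hxsI (hxxI ((k+1)+d))
      rw [h2]
      have h3 : qI (xx ((k+1)+d) - xx (k+1)) ≤ 2 * Λ * rr (k+1) := hCauchy (k+1) d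
      nlinarith [hΛ0]
    have htend : Tendsto (fun m => Λ * (qI (xx m - xs) + 2 * Λ * rr (k+1))) atTop
        (𝓝 (Λ * (0 + 2 * Λ * rr (k+1)))) := by
      exact (Tendsto.add hxs tendsto_const_nhds).const_mul Λ
    have := ge_of_tendsto htend hev
    nlinarith [this]
  -- contradiction
  set ks : ℕ := ⌈qJ (a * xs)⌉₊ with hksdef
  have hxsE : xs ∈ I ∧ qJ (a * xs) ≤ (ks:ℝ) := ⟨hxsI, Nat.le_ceil _⟩
  have h1 := (hspec ks).2.2 xs hxsE
  have h2 : qI (xx (ks+1) - xs) = qI (xs - xx (ks+1)) :=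
    q_neg_sub hI.snorm hI.ideal (hxxI (ks+1)) hxsI
  rw [h2] at h1
  have h3 := hclose ks
  have hr := hrr0 (ks+1)
  have hΛ23 : Λ^2 ≤ Λ^3 := by nlinarith
  have e1 : Λ^2 * rr (ks+1) ≤ Λ^3 * rr (ks+1) := mul_le_mul_of_nonneg_right hΛ23 hr.le
  have e2 : 0 < Λ^2 * rr (ks+1) := by positivity
  nlinarith [e1, e2, h1, h3]

/-- Part 1: boundedness of the multiplication operator. -/
lemma mult_bounded {I J : Set (H →L[ℂ] H)} {qI qJ : (H →L[ℂ] H) → ℝ} {CI CJ : ℝ}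
    (hI : IsSymQBIdeal I qI CI) (hJ : IsSymQBIdeal J qJ CJ)
    {a : H →L[ℂ] H} (ha : a ∈ dualIdeal J I) :
    ∃ M : ℝ, 0 ≤ M ∧ ∀ x ∈ I, qJ (a * x) ≤ M * qI x := by
  set Λ : ℝ := max CI CJ with hΛdef
  have hΛ : 1 ≤ Λ := le_trans hI.snorm.one_le (le_max_left _ _)
  have hΛ0 : (0:ℝ) < Λ := lt_of_lt_of_le one_pos hΛ
  have hCIΛ : CI ≤ Λ := le_max_left _ _
  have hCJΛ : CJ ≤ Λ := le_max_right _ _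
  have qI0 : qI 0 = 0 := q_zero hI.snorm hI.ideal.zero_mem
  have qJ0 : qJ 0 = 0 := q_zero hJ.snorm hJ.ideal.zero_mem
  have normI : ∀ x ∈ I, ‖x‖ ≤ qI x := fun x hx => norm_le_q hI.ideal hI.snorm hx
  have normJ : ∀ x ∈ J, ‖x‖ ≤ qJ x := fun x hx => norm_le_q hJ.ideal hJ.snorm hx
  obtain ⟨k, x₀, hx₀, r, hr, hball⟩ := baire_interior hI hJ ha
  set K₀ : ℝ := 2 * Λ * k with hK₀def
  have hK₀ : 0 ≤ K₀ := by positivity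
  -- approximate every small element by bounded ones
  have star : ∀ z, z ∈ I → qI z < r → ∀ ρ, 0 < ρ →
      ∃ w, w ∈ I ∧ qJ (a * w) ≤ K₀ ∧ qI (z - w) < ρ := by
    intro z hz hzr ρ hρ
    have hxz : x₀ + z ∈ I := hI.ideal.add_mem hx₀ hz
    have hq1 : qI ((x₀ + z) - x₀) < r := by
      have : (x₀ + z) - x₀ = z := by abel
      rwa [this]
    have hq2 : qI (x₀ - x₀) < r := by rw [sub_self, qI0]; exact hr
    obtain ⟨w₁, hw₁, hw₁d⟩ := hball (x₀ + z) hxz hq1 (ρ/(2*Λ)) (by positivity)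
    obtain ⟨w₂, hw₂, hw₂d⟩ := hball x₀ hx₀ hq2 (ρ/(2*Λ)) (by positivity)
    refine ⟨w₁ - w₂, hI.ideal.sub_mem hw₁.1 hw₂.1, ?_, ?_⟩
    · have he : a * (w₁ - w₂) = a * w₁ - a * w₂ := by rw [mul_sub]
      rw [he]
      have h1 : qJ (a * w₁ - a * w₂) ≤ Λ * (qJ (a * w₁) + qJ (a * w₂)) :=
        q_sub_le_lam hJ.snorm hJ.ideal hCJΛ (ha w₁ hw₁.1) (ha w₂ hw₂.1)
      refine le_trans h1 ?_
      rw [hK₀def]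
      nlinarith [hw₁.2, hw₂.2, hΛ0]
    · have he : z - (w₁ - w₂) = ((x₀ + z) - w₁) - (x₀ - w₂) := by abel
      rw [he]
      have h1 : qI (((x₀ + z) - w₁) - (x₀ - w₂))
          ≤ Λ * (qI ((x₀ + z) - w₁) + qI (x₀ - w₂)) :=
        q_sub_le_lam hI.snorm hI.ideal hCIΛ (hI.ideal.sub_mem hxz hw₁.1)
          (hI.ideal.sub_mem hx₀ hw₂.1)
      refine lt_of_le_of_lt h1 ?_
      have : qI ((x₀ + z) - w₁) + qI (x₀ - w₂) < ρ/(2*Λ) + ρ/(2*Λ) := add_lt_add hw₁d hw₂d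
      calc Λ * (qI ((x₀ + z) - w₁) + qI (x₀ - w₂)) < Λ * (ρ/(2*Λ) + ρ/(2*Λ)) :=
            mul_lt_mul_of_pos_left this hΛ0
        _ = ρ := by field_simp; ring
  -- geometric approximation scheme
  set θ : ℝ := (2*Λ)⁻¹ with hθdef
  have hθ0 : 0 < θ := by positivity
  have hθ1 : θ < 1 := by
    rw [hθdef, inv_lt_one_iff₀]; right; linarith
  have hΛθ : Λ * θ ≤ 1/2 := by
    rw [hθdef, mul_inv_le_iff₀ (by positivity)]
    nlinarith
  set M₀ : ℝ := 2 * Λ^2 * K₀ with hM₀def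
  have key : ∀ z, z ∈ I → qI z < r → qJ (a * z) ≤ M₀ := by
    intro z hzI hzr
    have zstep : ∀ (i : ℕ) (z' : H →L[ℂ] H), ∃ z'',
        (z' ∈ I ∧ qI z' < r * θ^i) →
          (z'' ∈ I ∧ qI z'' < r * θ^(i+1) ∧ qJ (a * (z' - z'')) ≤ K₀ * θ^i) := by
      intro i z'
      by_cases hc : z' ∈ I ∧ qI z' < r * θ^i
      · obtain ⟨hz', hq⟩ := hc
        set c : ℂ := ((θ^i : ℝ) : ℂ) with hcdef
        have hθi0 : (0:ℝ) < θ^i := by positivity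
        have hc0 : c ≠ 0 := by
          rw [hcdef]; exact_mod_cast hθi0.ne'
        have hcn : ‖c‖ = θ^i := by
          rw [hcdef, Complex.norm_real, Real.norm_eq_abs, abs_of_pos hθi0]
        have hcin : ‖c⁻¹‖ = (θ^i)⁻¹ := by rw [norm_inv, hcn]
        have huI : c⁻¹ • z' ∈ I := hI.ideal.smul_mem _ hz'
        have huq : qI (c⁻¹ • z') < r := by
          rw [hI.snorm.smul c⁻¹ z' hz', hcin]
          calc (θ^i)⁻¹ * qI z' < (θ^i)⁻¹ * (r * θ^i) :=
                mul_lt_mul_of_pos_left hq (by positivity)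
            _ = r := by field_simp
        obtain ⟨w, hwI, hwq, hwd⟩ := star (c⁻¹ • z') huI huq (r*θ) (by positivity)
        refine ⟨z' - c • w, fun _ => ?_⟩
        have hz'' : z' - c • w ∈ I := hI.ideal.sub_mem hz' (hI.ideal.smul_mem _ hwI)
        have hdiff : z' - (z' - c • w) = c • w := by abel
        refine ⟨hz'', ?_, ?_⟩
        · have he : z' - c • w = c • ((c⁻¹ • z') - w) := by
            rw [smul_sub, smul_smul, mul_inv_cancel₀ hc0, one_smul]
          rw [he, hI.snorm.smul _ _ (hI.ideal.sub_mem huI hwI), hcn]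
          calc θ^i * qI ((c⁻¹ • z') - w) < θ^i * (r * θ) :=
                mul_lt_mul_of_pos_left hwd hθi0
            _ = r * θ^(i+1) := by ring
        · rw [hdiff, mul_smul_comm, hJ.snorm.smul _ _ (ha w hwI), hcn]
          exact mul_le_mul_of_nonneg_left hwq hθi0.le |>.trans_eq (mul_comm _ _)
      · exact ⟨0, fun h => absurd h hc⟩
    set zs : ℕ → H →L[ℂ] H := fun i => Nat.rec z (fun i zi => (zstep i zi).choose) i with hzsdef
    have zs_succ : ∀ i, zs (i+1) = (zstep i (zs i)).choose := fun i => rfl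
    have zs0 : zs 0 = z := rfl
    have zinv : ∀ i, zs i ∈ I ∧ qI (zs i) < r * θ^i := by
      intro i
      induction i with
      | zero => exact ⟨hzI, by simpa [zs0] using hzr⟩
      | succ i ih =>
        have := (zstep i (zs i)).choose_spec ih
        rw [← zs_succ i] at this
        exact ⟨this.1, this.2.1⟩
    have zdq : ∀ i, qJ (a * (zs i - zs (i+1))) ≤ K₀ * θ^i := by
      intro i
      have := (zstep i (zs i)).choose_spec (zinv i)
      rw [← zs_succ i] at this
      exact this.2.2
    -- partial sums converge
    set y : ℕ → H →L[ℂ] H := fun i => zs i - zs (i+1) with hydef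
    have hyI : ∀ i, y i ∈ I := fun i => hI.ideal.sub_mem (zinv i).1 (zinv (i+1)).1
    have htel : ∀ n d, zs n - zs (n+d) = ∑ i ∈ Finset.Ico n (n+d), y i := by
      intro n d
      have := telescope_Ico zs d n
      have he : zs n - zs (n + d) = -(zs (n+d) - zs n) := by abel
      rw [he, this, ← Finset.sum_neg_distrib]
      refine Finset.sum_congr rfl fun i _ => ?_
      rw [hydef, neg_sub]
    set cm : ℕ → H →L[ℂ] H := fun m => a * (zs 0 - zs m) with hcmdef
    have hcmJ : ∀ m, cm m ∈ J := fun m => ha _ (hI.ideal.sub_mem (zinv 0).1 (zinv m).1)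
    have hcm_diff : ∀ n d, qJ (cm (n+d) - cm n) ≤ 2 * Λ * (K₀ * θ^n) := by
      intro n d
      have he : cm (n+d) - cm n = a * (zs n - zs (n+d)) := by
        rw [hcmdef]
        simp only [mul_sub]
        abel
      rw [he, htel n d, Finset.mul_sum]
      refine sum_bound hΛ hJ.ideal.zero_mem qJ0
        (fun u hu v hv => hJ.ideal.add_mem hu hv)
        (fun u hu v hv => q_add_le_lam hJ.snorm hCJΛ hu hv)
        hθ0.le hΛθ _ (fun i => ha _ (hyI i)) d n (K₀ * θ^n) (by positivity)
        fun j => ?_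
      calc qJ (a * y (n + j)) ≤ K₀ * θ^(n+j) := zdq (n+j)
        _ = K₀ * θ^n * θ^j := by ring
    have hcm_bound : ∀ m, qJ (cm m) ≤ 2 * Λ * K₀ := by
      intro m
      have h0 : cm 0 = 0 := by rw [hcmdef]; simp
      have := hcm_diff 0 m
      simpa [h0] using this
    -- Cauchy in qJ
    obtain ⟨l, hlJ, hl⟩ := hJ.complete cm hcmJ (by
      intro ε hε
      obtain ⟨N, hN⟩ := exists_pow_lt_of_lt_one
        (show (0:ℝ) < ε / (2*Λ*K₀ + 1) by positivity) hθ1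
      refine ⟨N, fun m n hm hn => ?_⟩
      have key2 : ∀ u v : ℕ, N ≤ u → u ≤ v → qJ (cm v - cm u) < ε := by
        intro u v hu huv
        obtain ⟨d, rfl⟩ : ∃ d, v = u + d := ⟨v - u, by omega⟩
        have h1 := hcm_diff u d
        have h2 : θ^u ≤ θ^N := pow_le_pow_of_le_one hθ0.le hθ1.le hu
        have h3 : (0:ℝ) < 2*Λ*K₀ + 1 := by positivity
        calc qJ (cm (u+d) - cm u) ≤ 2 * Λ * (K₀ * θ^u) := h1
          _ ≤ (2*Λ*K₀ + 1) * θ^N := by nlinarith [pow_nonneg hθ0.le u, pow_nonneg hθ0.le N]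
          _ < (2*Λ*K₀ + 1) * (ε / (2*Λ*K₀ + 1)) := by
              exact mul_lt_mul_of_pos_left hN h3
          _ = ε := by field_simp
      rcases le_total m n with h | h
      · have := key2 m n hm h
        rwa [q_neg_sub hJ.snorm hJ.ideal (hcmJ n) (hcmJ m)] at this
      · exact key2 n m hn h)
    -- identify the limit
    have hcm_tendsto : Tendsto cm atTop (𝓝 (a * z)) := by
      rw [tendsto_iff_norm_sub_tendsto_zero]
      refine squeeze_zero (g := fun m => ‖a‖ * (r * θ^m)) (fun m => norm_nonneg _)
        (fun m => ?_) ?_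
      · have he : cm m - a * z = -(a * zs m) := by
          rw [hcmdef, zs0]
          simp only [mul_sub]
          abel
        rw [he, norm_neg]
        calc ‖a * zs m‖ ≤ ‖a‖ * ‖zs m‖ := norm_mul_le a (zs m)
          _ ≤ ‖a‖ * (r * θ^m) := by
              have h1 : ‖zs m‖ ≤ qI (zs m) := normI _ (zinv m).1
              have h2 : qI (zs m) ≤ r * θ^m := (zinv m).2.le
              exact mul_le_mul_of_nonneg_left (le_trans h1 h2) (norm_nonneg a)
      · have h2 := (tendsto_pow_atTop_nhds_zero_of_lt_one hθ0.le hθ1).const_mul (‖a‖ * r)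
        rw [mul_zero] at h2
        refine h2.congr fun m => ?_
        ring
    have hcml : Tendsto cm atTop (𝓝 l) := by
      rw [tendsto_iff_norm_sub_tendsto_zero]
      exact squeeze_zero (fun m => norm_nonneg _)
        (fun m => normJ _ (hJ.ideal.sub_mem (hcmJ m) hlJ)) hl
    have hlz : a * z = l := tendsto_nhds_unique hcm_tendsto hcml
    have hev : ∀ᶠ m in atTop, qJ l ≤ Λ * (qJ (cm m - l) + 2*Λ*K₀) := by
      refine Eventually.of_forall (fun m => ?_)
      have h1 : qJ l ≤ Λ * (qJ (l - cm m) + qJ (cm m)) := by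
        have he : l = (l - cm m) + cm m := by abel
        calc qJ l = qJ ((l - cm m) + cm m) := by rw [← he]
          _ ≤ Λ * (qJ (l - cm m) + qJ (cm m)) :=
              q_add_le_lam hJ.snorm hCJΛ (hJ.ideal.sub_mem hlJ (hcmJ m)) (hcmJ m)
      rw [q_neg_sub hJ.snorm hJ.ideal hlJ (hcmJ m)] at h1
      refine le_trans h1 ?_
      have := hcm_bound m
      nlinarith [hJ.snorm.nonneg _ (hJ.ideal.sub_mem (hcmJ m) hlJ)]
    have htendb : Tendsto (fun m => Λ * (qJ (cm m - l) + 2*Λ*K₀)) atTop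
        (𝓝 (Λ * (0 + 2*Λ*K₀))) := (hl.add tendsto_const_nhds).const_mul Λ
    have hfin := ge_of_tendsto htendb hev
    rw [hlz, hM₀def]
    nlinarith [hfin]
  -- conclude by scaling
  set M : ℝ := 2 * M₀ / r with hMdef
  have hM₀0 : 0 ≤ M₀ := by rw [hM₀def]; positivity
  refine ⟨M, by positivity, fun x hx => ?_⟩
  rcases eq_or_ne x 0 with rfl | hx0
  · rw [mul_zero, qJ0, qI0, mul_zero]
  · have ht : 0 < qI x :=
      lt_of_le_of_ne (hI.snorm.nonneg x hx)
        (fun h => hx0 ((hI.snorm.eq_zero x hx).1 h.symm))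
    set c : ℂ := ((r / (2 * qI x) : ℝ) : ℂ) with hcdef
    have hcn : ‖c‖ = r / (2 * qI x) := by
      rw [hcdef, Complex.norm_real, Real.norm_eq_abs, abs_of_pos (by positivity)]
    have hzI : c • x ∈ I := hI.ideal.smul_mem _ hx
    have hzq : qI (c • x) < r := by
      rw [hI.snorm.smul c x hx, hcn]
      have he : r / (2 * qI x) * qI x = r / 2 := by field_simp
      rw [he]; linarith
    have h1 : qJ (a * (c • x)) ≤ M₀ := key _ hzI hzq
    rw [mul_smul_comm, hJ.snorm.smul c _ (ha x hx), hcn] at h1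
    have h2 : qJ (a * x) = (2 * qI x / r) * (r / (2 * qI x) * qJ (a * x)) := by
      field_simp
    rw [h2]
    calc (2 * qI x / r) * (r / (2 * qI x) * qJ (a * x)) ≤ (2 * qI x / r) * M₀ :=
          mul_le_mul_of_nonneg_left h1 (by positivity)
      _ = M * qI x := by rw [hMdef]; ring


/-- For symmetric quasi-Banach ideals `I, J` of compact operators
with `I ⊄ J`: each multiplication map `T_a(x) = ax` (`a ∈ J:I`) is continuous from
`I` to `J`; `‖a‖_{J:I}` is a complete symmetric quasi-norm on the two-sided ideal
`J:I` with modulus of concavity at most that of `qJ`; and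
`qJ (a x) ≤ ‖a‖_{J:I} qI x` for all `a ∈ J:I`, `x ∈ I`. -/
theorem statement17 (I J : Set (H →L[ℂ] H)) (qI qJ : (H →L[ℂ] H) → ℝ) (CI CJ : ℝ)
    (hI : IsSymQBIdeal I qI CI) (hJ : IsSymQBIdeal J qJ CJ) (hnsub : ¬ I ⊆ J) :
    (∀ a ∈ dualIdeal J I, ∃ M : ℝ, 0 ≤ M ∧ ∀ x ∈ I, qJ (a * x) ≤ M * qI x) ∧
    IsOpIdeal (dualIdeal J I) ∧
    IsSymmetricQuasiNorm (dualIdeal J I) (dualQN J I qJ qI) CJ ∧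
    QCompleteOn (dualIdeal J I) (dualQN J I qJ qI) ∧
    (∀ a ∈ dualIdeal J I, ∀ x ∈ I, qJ (a * x) ≤ dualQN J I qJ qI a * qI x) := by
  classical
  obtain ⟨xh, hxhI, hxhJ⟩ := Set.not_subset.1 hnsub
  have hxh0 : xh ≠ 0 := fun h => hxhJ (h ▸ hJ.ideal.zero_mem)
  have rkI : ∀ f g : H, rk f g ∈ I := fun f g => rk_mem_ideal hI.ideal hxhI hxh0 f g
  obtain ⟨v₁, hv₁⟩ : ∃ v, xh v ≠ 0 := by
    by_contra hc
    push_neg at hc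
    exact hxh0 (ContinuousLinearMap.ext fun v => by simp [hc v])
  haveI : Nontrivial H := ⟨⟨xh v₁, 0, hv₁⟩⟩
  have qI0 : qI 0 = 0 := q_zero hI.snorm hI.ideal.zero_mem
  have qJ0 : qJ 0 = 0 := q_zero hJ.snorm hJ.ideal.zero_mem
  have normI : ∀ x ∈ I, ‖x‖ ≤ qI x := fun x hx => norm_le_q hI.ideal hI.snorm hx
  have normJ : ∀ x ∈ J, ‖x‖ ≤ qJ x := fun x hx => norm_le_q hJ.ideal hJ.snorm hx
  have hCJ0 : (0:ℝ) < CJ := lt_of_lt_of_le one_pos hJ.snorm.one_le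
  -- Part 2 : the dual is an ideal
  have hideal : IsOpIdeal (dualIdeal J I) := by
    constructor
    · intro x hx; rw [zero_mul]; exact hJ.ideal.zero_mem
    · intro x y hx hy z hz; rw [add_mul]; exact hJ.ideal.add_mem (hx z hz) (hy z hz)
    · intro α x hx z hz; rw [smul_mul_assoc]; exact hJ.ideal.smul_mem α (hx z hz)
    · intro b x hx z hz; rw [mul_assoc]; exact hJ.ideal.mul_mem_left b (hx z hz)
    · intro b x hx z hz; rw [mul_assoc]; exact hx _ (hI.ideal.mul_mem_left b hz)
  -- the sup sets
  set Sa : (H →L[ℂ] H) → Set ℝ := fun b => {r : ℝ | ∃ x ∈ I, qI x ≤ 1 ∧ r = qJ (b * x)}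
    with hSadef
  have hdq : ∀ b, dualQN J I qJ qI b = sSup (Sa b) := fun b => rfl
  have mem0 : ∀ b, (0:ℝ) ∈ Sa b := by
    intro b
    exact ⟨0, hI.ideal.zero_mem, by rw [qI0]; norm_num, by rw [mul_zero, qJ0]⟩
  have part1 : ∀ a ∈ dualIdeal J I, ∃ M : ℝ, 0 ≤ M ∧ ∀ x ∈ I, qJ (a * x) ≤ M * qI x :=
    fun a ha => mult_bounded hI hJ ha
  have hbdd : ∀ a ∈ dualIdeal J I, BddAbove (Sa a) := by
    intro a ha
    obtain ⟨M, hM0, hM⟩ := part1 a ha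
    refine ⟨M, ?_⟩
    rintro r ⟨x, hx, hq, rfl⟩
    calc qJ (a * x) ≤ M * qI x := hM x hx
      _ ≤ M * 1 := mul_le_mul_of_nonneg_left hq hM0
      _ = M := mul_one M
  have hnn : ∀ a ∈ dualIdeal J I, 0 ≤ dualQN J I qJ qI a := by
    intro a ha
    rw [hdq]
    exact le_csSup (hbdd a ha) (mem0 a)
  have hub : ∀ a ∈ dualIdeal J I, ∀ x ∈ I, qI x ≤ 1 → qJ (a * x) ≤ dualQN J I qJ qI a := by
    intro a ha x hx hq
    rw [hdq]
    exact le_csSup (hbdd a ha) ⟨x, hx, hq, rfl⟩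
  have hsup_le : ∀ (a : H →L[ℂ] H) (B : ℝ),
      (∀ x ∈ I, qI x ≤ 1 → qJ (a * x) ≤ B) → dualQN J I qJ qI a ≤ B := by
    intro a B hB
    rw [hdq]
    refine csSup_le ⟨0, mem0 a⟩ ?_
    rintro r ⟨x, hx, hq, rfl⟩
    exact hB x hx hq
  -- Part 5
  have part5 : ∀ a ∈ dualIdeal J I, ∀ x ∈ I, qJ (a * x) ≤ dualQN J I qJ qI a * qI x := by
    intro a ha x hx
    rcases eq_or_ne x 0 with rfl | hx0
    · rw [mul_zero, qJ0, qI0, mul_zero]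
    · have ht : 0 < qI x :=
        lt_of_le_of_ne (hI.snorm.nonneg x hx)
          (fun h => hx0 ((hI.snorm.eq_zero x hx).1 h.symm))
      set c : ℂ := (((qI x)⁻¹ : ℝ) : ℂ) with hcdef
      have hcn : ‖c‖ = (qI x)⁻¹ := by
        rw [hcdef, Complex.norm_real, Real.norm_eq_abs, abs_of_pos (by positivity)]
      have hcx : c • x ∈ I := hI.ideal.smul_mem _ hx
      have hq1 : qI (c • x) ≤ 1 := by
        rw [hI.snorm.smul c x hx, hcn, inv_mul_cancel₀ ht.ne']
      have h1 := hub a ha _ hcx hq1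
      rw [mul_smul_comm, hJ.snorm.smul c _ (ha x hx), hcn] at h1
      have h2 := mul_le_mul_of_nonneg_left h1 ht.le
      calc qJ (a * x) = qI x * ((qI x)⁻¹ * qJ (a * x)) := by field_simp
        _ ≤ qI x * dualQN J I qJ qI a := h2
        _ = dualQN J I qJ qI a * qI x := mul_comm _ _
  -- dualQN of 0 is 0
  have dq0 : dualQN J I qJ qI 0 = 0 := by
    refine le_antisymm (hsup_le 0 0 fun x hx hq => ?_) (hnn 0 hideal.zero_mem)
    rw [zero_mul, qJ0]
  -- Part 3 : symmetric quasi-norm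
  have part3 : IsSymmetricQuasiNorm (dualIdeal J I) (dualQN J I qJ qI) CJ := by
    constructor
    · exact hJ.snorm.one_le
    · exact hnn
    · intro a ha
      constructor
      · intro h0
        have hax : ∀ x ∈ I, a * x = 0 := by
          intro x hx
          have h1 := part5 a ha x hx
          rw [h0, zero_mul] at h1
          exact (hJ.snorm.eq_zero _ (ha x hx)).1
            (le_antisymm h1 (hJ.snorm.nonneg _ (ha x hx)))
        ext v
        rcases eq_or_ne v 0 with rfl | hv0
        · simp
        · have hp := hax (rk v v) (rkI v v)
          have h2 : (a * rk v v) v = ⟪v, v⟫ • a v := by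
            rw [mul_apply_eq_comp, rk_apply, map_smul]
          rw [hp] at h2
          have h3 : ⟪v, v⟫ • a v = 0 := by
            rw [← h2]; simp
          rcases smul_eq_zero.1 h3 with h | h
          · exact absurd h (inner_self_ne_zero.2 hv0)
          · simp [h]
      · rintro rfl
        exact dq0
    · intro α a ha
      rcases eq_or_ne α 0 with rfl | hα
      · rw [zero_smul, norm_zero, zero_mul, dq0]
      · have hαn : 0 < ‖α‖ := norm_pos_iff.2 hα
        apply le_antisymm
        · refine hsup_le _ _ fun x hx hq => ?_
          rw [smul_mul_assoc, hJ.snorm.smul α _ (ha x hx)]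
          exact mul_le_mul_of_nonneg_left (hub a ha x hx hq) (norm_nonneg α)
        · have h1 : dualQN J I qJ qI a ≤ ‖α‖⁻¹ * dualQN J I qJ qI (α • a) := by
            refine hsup_le _ _ fun x hx hq => ?_
            have h2 : qJ ((α • a) * x) = ‖α‖ * qJ (a * x) := by
              rw [smul_mul_assoc, hJ.snorm.smul α _ (ha x hx)]
            have h3 := hub (α • a) (hideal.smul_mem α ha) x hx hq
            rw [h2] at h3
            calc qJ (a * x) = ‖α‖⁻¹ * (‖α‖ * qJ (a * x)) := by
                  rw [← mul_assoc, inv_mul_cancel₀ hαn.ne', one_mul]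
              _ ≤ ‖α‖⁻¹ * dualQN J I qJ qI (α • a) :=
                  mul_le_mul_of_nonneg_left h3 (by positivity)
          have h4 := mul_le_mul_of_nonneg_left h1 (norm_nonneg α)
          calc ‖α‖ * dualQN J I qJ qI a
              ≤ ‖α‖ * (‖α‖⁻¹ * dualQN J I qJ qI (α • a)) := h4
            _ = dualQN J I qJ qI (α • a) := by
                  rw [← mul_assoc, mul_inv_cancel₀ hαn.ne', one_mul]
    · intro a ha b hb
      refine hsup_le _ _ fun x hx hq => ?_
      rw [add_mul]
      have h1 : qJ (a * x + b * x) ≤ CJ * (qJ (a * x) + qJ (b * x)) :=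
        hJ.snorm.add_le _ (ha x hx) _ (hb x hx)
      refine le_trans h1 (mul_le_mul_of_nonneg_left ?_ hCJ0.le)
      have h2 : qJ (a * x) ≤ dualQN J I qJ qI a :=
        le_trans (part5 a ha x hx)
          (mul_le_of_le_one_right (hnn a ha) hq)
      have h3 : qJ (b * x) ≤ dualQN J I qJ qI b :=
        le_trans (part5 b hb x hx)
          (mul_le_of_le_one_right (hnn b hb) hq)
      exact add_le_add h2 h3
    · intro u v x hx
      refine hsup_le _ _ fun w hw hq => ?_
      have hvw : v * w ∈ I := hI.ideal.mul_mem_left v hw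
      have hassoc : (u * x * v) * w = u * (x * (v * w)) := by
        rw [mul_assoc, mul_assoc]
      rw [hassoc]
      have h1 : qJ (u * (x * (v * w)) * 1) ≤ ‖u‖ * qJ (x * (v * w)) * ‖(1 : H →L[ℂ] H)‖ :=
        hJ.snorm.sym u 1 _ (hx _ hvw)
      rw [mul_one, norm_one, mul_one] at h1
      have h2 : qJ (x * (v * w)) ≤ dualQN J I qJ qI x * qI (v * w) := part5 x hx _ hvw
      have h3 : qI (v * w) ≤ ‖v‖ := by
        have h4 : qI (v * w * 1) ≤ ‖v‖ * qI w * ‖(1 : H →L[ℂ] H)‖ := hI.snorm.sym v 1 w hw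
        rw [mul_one, norm_one, mul_one] at h4
        refine le_trans h4 ?_
        exact mul_le_of_le_one_right (norm_nonneg v) hq
      have h5 : 0 ≤ dualQN J I qJ qI x := hnn x hx
      refine le_trans h1 ?_
      have h6 : qJ (x * (v * w)) ≤ dualQN J I qJ qI x * ‖v‖ :=
        le_trans h2 (mul_le_mul_of_nonneg_left h3 h5)
      calc ‖u‖ * qJ (x * (v * w)) ≤ ‖u‖ * (dualQN J I qJ qI x * ‖v‖) :=
            mul_le_mul_of_nonneg_left h6 (norm_nonneg u)
        _ = ‖u‖ * dualQN J I qJ qI x * ‖v‖ := by ring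
    · intro p hp hproj
      obtain ⟨hpp, hsa, hrank⟩ := hproj
      obtain ⟨g, hg0, hspan⟩ := spanned_of_finrank_eq_one p hrank
      have hpI : p ∈ I := by
        rw [eq_rk_of_spanned p g hg0 hspan]
        exact rkI _ _
      have hqIp : qI p = 1 := hI.snorm.rank_one p hpI ⟨hpp, hsa, hrank⟩
      have hpJ : p ∈ J := by
        have := hp p hpI
        rwa [hpp] at this
      have hqJp : qJ p = 1 := hJ.snorm.rank_one p hpJ ⟨hpp, hsa, hrank⟩
      have hpn : ‖p‖ ≤ 1 := by
        have hstar : star p = p := hsa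
        have h1 : ‖star p * p‖ = ‖p‖ * ‖p‖ := CStarRing.norm_star_mul_self
        rw [hstar, hpp] at h1
        nlinarith [norm_nonneg p]
      apply le_antisymm
      · refine hsup_le _ _ fun x hx hq => ?_
        have hspan2 : ∀ w, ∃ c : ℂ, (p * x) w = c • g := fun w => hspan (x w)
        have h1 : qJ (p * x) ≤ ‖p * x‖ :=
          q_le_norm_of_spanned hJ.ideal hJ.snorm (hp x hx) g hspan2
        calc qJ (p * x) ≤ ‖p * x‖ := h1
          _ ≤ ‖p‖ * ‖x‖ := norm_mul_le p x
          _ ≤ 1 * 1 := by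
              have h2 : ‖x‖ ≤ 1 := le_trans (normI x hx) hq
              exact mul_le_mul hpn h2 (norm_nonneg x) zero_le_one
          _ = 1 := by norm_num
      · rw [hdq]
        refine le_csSup (hbdd p hp) ?_
        exact ⟨p, hpI, le_of_eq hqIp, by rw [hpp, hqJp]⟩
  -- norm bound by the dual quasinorm
  have norm_le_dq : ∀ a ∈ dualIdeal J I, ‖a‖ ≤ dualQN J I qJ qI a := by
    intro a ha
    refine opNorm_le_bound a (hnn a ha) fun v => ?_
    rcases eq_or_ne v 0 with rfl | hv0
    · simp
    · have hnv : (0:ℝ) < ‖v‖ := norm_pos_iff.2 hv0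
      set vh : H := ((‖v‖⁻¹ : ℝ) : ℂ) • v with hvh
      have hvh1 : ‖vh‖ = 1 := by
        rw [hvh, norm_smul]
        simp [abs_of_nonneg (inv_nonneg.2 hnv.le), inv_mul_cancel₀ hnv.ne']
      have hv_eq : v = ((‖v‖ : ℝ) : ℂ) • vh := by
        rw [hvh, smul_smul]
        have he : ((‖v‖:ℝ):ℂ) * ((‖v‖⁻¹:ℝ):ℂ) = 1 := by
          push_cast
          exact mul_inv_cancel₀ (Complex.ofReal_ne_zero.2 hnv.ne')
        rw [he, one_smul]
      have hvhvh : ⟪vh, vh⟫ = 1 := by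
        rw [inner_self_eq_norm_sq_to_K, hvh1]; norm_num
      set p : H →L[ℂ] H := rk vh vh with hpdef
      have hqIp : qI p = 1 := hI.snorm.rank_one p (rkI vh vh) (isRankOneProjection_rk vh hvh1)
      have h1 : qJ (a * p) ≤ dualQN J I qJ qI a := hub a ha p (rkI vh vh) (le_of_eq hqIp)
      have h2 : ‖a * p‖ ≤ qJ (a * p) := normJ _ (ha p (rkI vh vh))
      have hpv : p v = v := by
        calc p v = ⟪vh, ((‖v‖:ℝ):ℂ) • vh⟫ • vh := by rw [hpdef, rk_apply, ← hv_eq]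
          _ = (((‖v‖:ℝ):ℂ) * ⟪vh, vh⟫) • vh := by rw [inner_smul_right]
          _ = ((‖v‖:ℝ):ℂ) • vh := by rw [hvhvh, mul_one]
          _ = v := hv_eq.symm
      calc ‖a v‖ = ‖(a * p) v‖ := by rw [mul_apply_eq_comp, hpv]
        _ ≤ ‖a * p‖ * ‖v‖ := le_opNorm _ v
        _ ≤ dualQN J I qJ qI a * ‖v‖ :=
            mul_le_mul_of_nonneg_right (le_trans h2 h1) (norm_nonneg v)
  -- Part 4 : completeness
  have part4 : QCompleteOn (dualIdeal J I) (dualQN J I qJ qI) := by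
    intro aseq hamem hcauchy
    -- operator norm Cauchy
    have hsubmem : ∀ m n, aseq m - aseq n ∈ dualIdeal J I :=
      fun m n => hideal.sub_mem (hamem m) (hamem n)
    have hCS : CauchySeq aseq := by
      rw [Metric.cauchySeq_iff]
      intro ε hε
      obtain ⟨N, hN⟩ := hcauchy ε hε
      refine ⟨N, fun m hm n hn => ?_⟩
      rw [dist_eq_norm]
      exact lt_of_le_of_lt (le_trans (norm_le_dq _ (hsubmem m n)) (le_refl _)) (hN m n hm hn)
    obtain ⟨b, hb⟩ := cauchySeq_tendsto_of_complete hCS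
    have hbn : Tendsto (fun m => ‖aseq m - b‖) atTop (𝓝 0) := by
      rwa [tendsto_iff_norm_sub_tendsto_zero] at hb
    -- pointwise limits in J
    have hbx : ∀ x ∈ I, b * x ∈ J ∧
        Tendsto (fun m => qJ (aseq m * x - b * x)) atTop (𝓝 0) := by
      intro x hx
      have hqc : ∀ ε : ℝ, 0 < ε → ∃ N, ∀ m n, N ≤ m → N ≤ n →
          qJ (aseq m * x - aseq n * x) < ε := by
        intro ε hε
        have hqx1 : (0:ℝ) < qI x + 1 := by nlinarith [hI.snorm.nonneg x hx]
        obtain ⟨N, hN⟩ := hcauchy (ε / (qI x + 1)) (div_pos hε hqx1)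
        refine ⟨N, fun m n hm hn => ?_⟩
        have h1 : aseq m * x - aseq n * x = (aseq m - aseq n) * x := by rw [sub_mul]
        rw [h1]
        have h2 := part5 _ (hsubmem m n) x hx
        have h3 := hN m n hm hn
        have h4 : 0 ≤ qI x := hI.snorm.nonneg x hx
        calc qJ ((aseq m - aseq n) * x) ≤ dualQN J I qJ qI (aseq m - aseq n) * qI x := h2
          _ ≤ (ε / (qI x + 1)) * qI x := by
              exact mul_le_mul_of_nonneg_right h3.le h4
          _ < ε := by
              rw [div_mul_eq_mul_div, div_lt_iff₀ hqx1]
              nlinarith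
      obtain ⟨l, hlJ, hl⟩ := hJ.complete (fun m => aseq m * x)
        (fun m => hamem m x hx) hqc
      have hten1 : Tendsto (fun m => aseq m * x) atTop (𝓝 (b * x)) := by
        rw [tendsto_iff_norm_sub_tendsto_zero]
        have hb2 : Tendsto (fun m => ‖aseq m - b‖ * ‖x‖) atTop (𝓝 (0 * ‖x‖)) :=
          hbn.mul_const ‖x‖
        rw [zero_mul] at hb2
        refine squeeze_zero (fun m => norm_nonneg _) (fun m => ?_) hb2
        rw [← sub_mul]
        exact norm_mul_le _ _
      have hten2 : Tendsto (fun m => aseq m * x) atTop (𝓝 l) := by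
        rw [tendsto_iff_norm_sub_tendsto_zero]
        exact squeeze_zero (fun m => norm_nonneg _)
          (fun m => normJ _ (hJ.ideal.sub_mem (hamem m x hx) hlJ)) hl
      have hlb : l = b * x := tendsto_nhds_unique hten2 hten1
      rw [hlb] at hlJ hl
      exact ⟨hlJ, hl⟩
    have hbmem : b ∈ dualIdeal J I := fun x hx => (hbx x hx).1
    refine ⟨b, hbmem, ?_⟩
    rw [Metric.tendsto_atTop]
    intro ε hε
    obtain ⟨N, hN⟩ := hcauchy (ε / (2 * CJ)) (by positivity)
    refine ⟨N, fun n hn => ?_⟩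
    have hnb : aseq n - b ∈ dualIdeal J I := hideal.sub_mem (hamem n) hbmem
    have hkey : dualQN J I qJ qI (aseq n - b) ≤ CJ * (ε / (2 * CJ)) := by
      refine hsup_le _ _ fun x hx hq => ?_
      have hev : ∀ᶠ m in atTop,
          qJ ((aseq n - b) * x) ≤ CJ * (ε / (2 * CJ) + qJ (aseq m * x - b * x)) := by
        refine eventually_atTop.2 ⟨N, fun m hm => ?_⟩
        have hsplit : (aseq n - b) * x = (aseq n - aseq m) * x + (aseq m * x - b * x) := by
          rw [sub_mul, sub_mul]
          abel
        have hmem1 : (aseq n - aseq m) * x ∈ J := hsubmem n m x hx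
        have hmem2 : aseq m * x - b * x ∈ J :=
          hJ.ideal.sub_mem (hamem m x hx) (hbmem x hx)
        have h1 : qJ ((aseq n - b) * x)
            ≤ CJ * (qJ ((aseq n - aseq m) * x) + qJ (aseq m * x - b * x)) := by
          rw [hsplit]
          exact hJ.snorm.add_le _ hmem1 _ hmem2
        refine le_trans h1 (mul_le_mul_of_nonneg_left ?_ hCJ0.le)
        have h2 : qJ ((aseq n - aseq m) * x) ≤ ε / (2 * CJ) := by
          have h3 := part5 _ (hsubmem n m) x hx
          have h4 := (hN n m hn hm).le
          have h5 : 0 ≤ dualQN J I qJ qI (aseq n - aseq m) := hnn _ (hsubmem n m)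
          calc qJ ((aseq n - aseq m) * x) ≤ dualQN J I qJ qI (aseq n - aseq m) * qI x := h3
            _ ≤ dualQN J I qJ qI (aseq n - aseq m) * 1 := mul_le_mul_of_nonneg_left hq h5
            _ ≤ ε / (2 * CJ) := by rw [mul_one]; exact h4
        linarith
      have htend : Tendsto (fun m => CJ * (ε / (2 * CJ) + qJ (aseq m * x - b * x))) atTop
          (𝓝 (CJ * (ε / (2 * CJ) + 0))) :=
        (Tendsto.add tendsto_const_nhds (hbx x hx).2).const_mul CJ
      have := ge_of_tendsto htend hev
      calc qJ ((aseq n - b) * x) ≤ CJ * (ε / (2 * CJ) + 0) := this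
        _ = CJ * (ε / (2 * CJ)) := by ring
    have hfin : dualQN J I qJ qI (aseq n - b) ≤ ε / 2 := by
      refine le_trans hkey ?_
      rw [mul_div_assoc']
      rw [div_le_div_iff₀ (by positivity) (by norm_num)]
      ring_nf
      nlinarith
    rw [Real.dist_eq, sub_zero, abs_of_nonneg (hnn _ hnb)]
    linarith
  exact ⟨part1, hideal, part3, part4, part5⟩

end
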